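/- Fix n ≥ 1 and positive reals a₀,…,a_{n−1}. Let 𝓕 be the set of nonempty proper faces of B∞ⁿ and for F ∈ 𝓕 let c_F be its center. For a configuration X = (x_F)_{F∈𝓕} ∈ (ℝⁿ)^𝓕 define g(X) = (1/n!)·Σ_𝔽 |det(x_{F₀}, x_{F₁}, …, x_{F_{n−1}})|, where the sum runs over all flags 𝔽 = (F₀ ⊂ F₁ ⊂ ⋯ ⊂ F_{n−1}) of faces of the cube and det denotes the determinant of the n×n matrix with the listed columns. Let X⁰ = (a_{dim F}·c_F)_{F∈𝓕}. Then g is Fréchet differentiable at X⁰, and for every ΔX = (Δx_F)_{F∈𝓕} satisfying ⟨Δx_F, c_F⟩ = 0 for all F ∈ 𝓕, the derivative satisfies Dg(X⁰)(ΔX) = 0; i.e., ΔX lies in the kernel of the differential of the volume function g at X⁰. -/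

import Mathlib

open MeasureTheory RealInnerProductSpace ENNReal Pointwise

noncomputable section

/-- Nonempty proper faces of the cube `B∞ⁿ`, encoded by nonzero sign vectors
`ε ∈ {−1,0,1}ⁿ`: the face is `{x ∈ B∞ⁿ : xᵢ = εᵢ whenever εᵢ ≠ 0}`. -/
def Face (n : ℕ) : Type := {ε : Fin n → SignType // ε ≠ 0}

instance (n : ℕ) : Fintype (Face n) := Subtype.fintype _

/-- The center `c_F` of the face with sign vector `ε` is `ε` itself (as a real vector). -/
def ctr {n : ℕ} (F : Face n) : EuclideanSpace ℝ (Fin n) := WithLp.toLp 2 (fun i => (F.1 i : ℝ))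

/-- The dimension of a face: the number of zero coordinates of its sign vector. -/
def faceDim {n : ℕ} (F : Face n) : ℕ := (Finset.univ.filter fun i => F.1 i = 0).card

/-- Sign vector of the `j`-th member `F_j` of the flag of faces determined by the
vertex sign pattern `s` and the zeroing order `σ`: coordinate `i` is zeroed at step `σ i`. -/
def flagVec {n : ℕ} (s : Fin n → Bool) (σ : Equiv.Perm (Fin n)) (j : Fin n) :
    Fin n → SignType :=
  fun i => if (σ i : ℕ) < (j : ℕ) then 0 else if s i then 1 else -1

theorem flagVec_ne_zero {n : ℕ} (s : Fin n → Bool) (σ : Equiv.Perm (Fin n)) (j : Fin n) :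
    flagVec s σ j ≠ 0 := by
  intro h
  have h1 := congrFun h (σ.symm j)
  simp only [flagVec, Equiv.apply_symm_apply, lt_irrefl, if_false, Pi.zero_apply] at h1
  by_cases hs : s (σ.symm j) <;> simp [hs] at h1

/-- The `j`-th member of the flag determined by `(s, σ)`, as a face of the cube. -/
def flagFace {n : ℕ} (s : Fin n → Bool) (σ : Equiv.Perm (Fin n)) (j : Fin n) : Face n :=
  ⟨flagVec s σ j, flagVec_ne_zero s σ j⟩

/-- The star-shaped polytope `⋃_𝔽 conv{0, x_{F₀}, …, x_{F_{n−1}}}`, the union running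
over all flags `𝔽 = (F₀ ⊂ ⋯ ⊂ F_{n−1})` of faces of the cube. -/
def starPoly {n : ℕ} (x : Face n → EuclideanSpace ℝ (Fin n)) :
    Set (EuclideanSpace ℝ (Fin n)) :=
  ⋃ s : Fin n → Bool, ⋃ σ : Equiv.Perm (Fin n),
    convexHull ℝ (insert 0 (Set.range fun j : Fin n => x (flagFace s σ j)))

/-- The (polytope-volume) function `g(X) = (1/n!)·Σ_𝔽 |det(x_{F₀}, …, x_{F_{n−1}})|`,
summing over all flags of faces of the cube. -/
def gvol (n : ℕ) (X : Face n → EuclideanSpace ℝ (Fin n)) : ℝ :=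
  (1 / n.factorial : ℝ) *
    ∑ s : Fin n → Bool, ∑ σ : Equiv.Perm (Fin n),
      |(Matrix.of fun i j : Fin n => X (flagFace s σ j) i).det|


namespace CK
open Finset
variable {n : ℕ}

def χ (b : Bool) : ℝ := if b then 1 else -1

lemma χ_mul_self (b : Bool) : χ b * χ b = 1 := by cases b <;> norm_num [χ]

lemma χ_not (b : Bool) : χ (!b) = - χ b := by cases b <;> norm_num [χ]

/-- the unperturbed matrix: row `j` is `a j • ctr (flagFace s σ j)`. -/
def T0 (a : ℕ → ℝ) (s : Fin n → Bool) (σ : Equiv.Perm (Fin n)) : Matrix (Fin n) (Fin n) ℝ :=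
  Matrix.of fun j i => a (j : ℕ) * (if (σ i : ℕ) < (j : ℕ) then 0 else χ (s i))

def Wmat (σ : Equiv.Perm (Fin n)) : Matrix (Fin n) (Fin n) ℝ :=
  Matrix.of fun j i => if (j : ℕ) ≤ (σ i : ℕ) then 1 else 0

def Umat (n : ℕ) : Matrix (Fin n) (Fin n) ℝ :=
  Matrix.of fun j i => if (j : ℕ) ≤ (i : ℕ) then 1 else 0

lemma det_Umat : (Umat n).det = 1 := by
  rw [Matrix.det_of_upperTriangular]
  · simp [Umat]
  · intro i j hij
    simp only [Umat, Matrix.of_apply, ite_eq_right_iff]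
    intro h; exact absurd (lt_of_le_of_lt h hij) (lt_irrefl _)

lemma det_Wmat (σ : Equiv.Perm (Fin n)) : (Wmat σ).det = Equiv.Perm.sign σ := by
  have : Wmat σ = (Umat n).submatrix id σ := by
    ext j i; simp [Wmat, Umat, Matrix.submatrix_apply]
  rw [this, Matrix.det_permute', det_Umat, mul_one]

lemma T0_eq (a : ℕ → ℝ) (s : Fin n → Bool) (σ : Equiv.Perm (Fin n)) :
    T0 a s σ = Matrix.diagonal (fun j : Fin n => a (j : ℕ)) * Wmat σ *
      Matrix.diagonal (fun i => χ (s i)) := by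
  ext j i
  rw [Matrix.mul_diagonal, Matrix.diagonal_mul]
  simp only [T0, Wmat, Matrix.of_apply]
  by_cases h : (σ i : ℕ) < (j : ℕ)
  · rw [if_pos h, if_neg (by omega)]; ring
  · rw [if_neg h, if_pos (by omega)]; ring

/-- the sign `e` -/
def esgn (s : Fin n → Bool) (σ : Equiv.Perm (Fin n)) : ℝ :=
  (Equiv.Perm.sign σ : ℤ) * ∏ i, χ (s i)

lemma esgn_mul_self (s : Fin n → Bool) (σ : Equiv.Perm (Fin n)) : esgn s σ * esgn s σ = 1 := by
  unfold esgn
  rw [mul_mul_mul_comm, ← Finset.prod_mul_distrib,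
    Finset.prod_congr rfl (fun i _ => χ_mul_self (s i)), Finset.prod_const_one, mul_one,
    ← Int.cast_mul, ← Units.val_mul, Int.units_mul_self]
  simp

lemma det_T0 (a : ℕ → ℝ) (s : Fin n → Bool) (σ : Equiv.Perm (Fin n)) :
    (T0 a s σ).det = esgn s σ * ∏ j : Fin n, a (j : ℕ) := by
  rw [T0_eq, Matrix.det_mul, Matrix.det_mul, det_Wmat, Matrix.det_diagonal,
    Matrix.det_diagonal, esgn]
  ring

/-- the (scaled) inverse matrix -/
def Cmat (a : ℕ → ℝ) (s : Fin n → Bool) (σ : Equiv.Perm (Fin n)) : Matrix (Fin n) (Fin n) ℝ :=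
  Matrix.of fun i j => (∏ k ∈ univ.erase j, a (k : ℕ)) * χ (s i) *
    ((if (j : ℕ) = (σ i : ℕ) then 1 else 0) - (if (j : ℕ) = (σ i : ℕ) + 1 then 1 else 0))

lemma T0_mul_Cmat (a : ℕ → ℝ) (s : Fin n → Bool) (σ : Equiv.Perm (Fin n)) :
    T0 a s σ * Cmat a s σ = (∏ j : Fin n, a (j : ℕ)) • 1 := by
  ext j j'
  rw [Matrix.mul_apply]
  have hterm : ∀ i : Fin n,
      T0 a s σ j i * Cmat a s σ i j' =
        (a (j : ℕ) * ∏ k ∈ univ.erase j', a (k : ℕ)) *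
          ((if (σ i : ℕ) < (j : ℕ) then 0 else 1) *
            ((if (j' : ℕ) = (σ i : ℕ) then 1 else 0) -
              (if (j' : ℕ) = (σ i : ℕ) + 1 then 1 else 0))) := by
    intro i
    simp only [T0, Cmat, Matrix.of_apply]
    by_cases h : (σ i : ℕ) < (j : ℕ)
    · rw [if_pos h, if_pos h]; ring
    · rw [if_neg h, if_neg h]
      have h2 : χ (s i) ^ 2 = 1 := by cases s i <;> norm_num [χ]
      ring_nf
      rw [h2]
      ring
  rw [Finset.sum_congr rfl fun i _ => hterm i, ← Finset.mul_sum]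
  have hre : ∑ i : Fin n, ((if (σ i : ℕ) < (j : ℕ) then (0:ℝ) else 1) *
      ((if (j' : ℕ) = (σ i : ℕ) then 1 else 0) - (if (j' : ℕ) = (σ i : ℕ) + 1 then 1 else 0)))
      = ∑ m : Fin n, ((if (m : ℕ) < (j : ℕ) then (0:ℝ) else 1) *
      ((if (j' : ℕ) = (m : ℕ) then 1 else 0) - (if (j' : ℕ) = (m : ℕ) + 1 then 1 else 0))) :=
    Equiv.sum_comp σ (fun m : Fin n => (if (m : ℕ) < (j : ℕ) then (0:ℝ) else 1) *
      ((if (j' : ℕ) = (m : ℕ) then 1 else 0) - (if (j' : ℕ) = (m : ℕ) + 1 then 1 else 0)))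
  rw [hre]
  have hA1 : ∑ m : Fin n, ((if (m : ℕ) < (j : ℕ) then (0:ℝ) else 1) *
      (if (j' : ℕ) = (m : ℕ) then 1 else 0))
      = (if (j : ℕ) ≤ (j' : ℕ) then 1 else 0) := by
    have : ∀ m : Fin n, ((if (m : ℕ) < (j : ℕ) then (0:ℝ) else 1) *
        (if (j' : ℕ) = (m : ℕ) then 1 else 0))
        = if j' = m then (if (m : ℕ) < (j : ℕ) then (0:ℝ) else 1) else 0 := by
      intro m
      by_cases h : (j' : ℕ) = (m : ℕ)
      · rw [if_pos h, if_pos (Fin.ext h), mul_one]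
      · rw [if_neg h, if_neg (fun hc => h (congrArg Fin.val hc)), mul_zero]
    rw [Finset.sum_congr rfl fun m _ => this m, Finset.sum_ite_eq]
    simp only [Finset.mem_univ, if_true]
    by_cases h : (j : ℕ) ≤ (j' : ℕ)
    · rw [if_neg (by omega), if_pos h]
    · rw [if_pos (by omega), if_neg h]
  have hA2 : ∑ m : Fin n, ((if (m : ℕ) < (j : ℕ) then (0:ℝ) else 1) *
      (if (j' : ℕ) = (m : ℕ) + 1 then 1 else 0))
      = (if (j : ℕ) + 1 ≤ (j' : ℕ) then 1 else 0) := by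
    rcases Nat.eq_zero_or_pos (j' : ℕ) with h0 | h0
    · rw [Finset.sum_eq_zero, if_neg (by omega)]
      intro m _
      rw [if_neg (show ¬((j' : ℕ) = (m : ℕ) + 1) by omega), mul_zero]
    · have hk : (j' : ℕ) - 1 < n := by omega
      have hval0 : ((⟨(j' : ℕ) - 1, hk⟩ : Fin n) : ℕ) = (j' : ℕ) - 1 := rfl
      rw [Finset.sum_eq_single (⟨(j' : ℕ) - 1, hk⟩ : Fin n)]
      · have hval : ((⟨(j' : ℕ) - 1, hk⟩ : Fin n) : ℕ) = (j' : ℕ) - 1 := rfl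
        rw [if_pos (show (j' : ℕ) = ((⟨(j' : ℕ) - 1, hk⟩ : Fin n) : ℕ) + 1 by
          rw [hval]; omega), mul_one]
        by_cases h : (j : ℕ) + 1 ≤ (j' : ℕ)
        · rw [if_neg (show ¬(((⟨(j' : ℕ) - 1, hk⟩ : Fin n) : ℕ) < (j : ℕ)) by
            rw [hval]; omega), if_pos h]
        · rw [if_pos (show (((⟨(j' : ℕ) - 1, hk⟩ : Fin n) : ℕ) < (j : ℕ)) by
            rw [hval]; omega), if_neg h]
      · intro m _ hm
        rw [if_neg (show ¬((j' : ℕ) = (m : ℕ) + 1) from fun hc =>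
          hm (Fin.ext (by rw [hval0]; omega))), mul_zero]
      · intro hmem; exact absurd (Finset.mem_univ _) hmem
  have hsplit : ∑ m : Fin n, ((if (m : ℕ) < (j : ℕ) then (0:ℝ) else 1) *
      ((if (j' : ℕ) = (m : ℕ) then 1 else 0) - (if (j' : ℕ) = (m : ℕ) + 1 then 1 else 0)))
      = (if (j : ℕ) ≤ (j' : ℕ) then 1 else 0) - (if (j : ℕ) + 1 ≤ (j' : ℕ) then 1 else 0) := by
    rw [← hA1, ← hA2, ← Finset.sum_sub_distrib]
    exact Finset.sum_congr rfl fun m _ => by ring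
  rw [hsplit]
  rw [Matrix.smul_apply, Matrix.one_apply]
  by_cases h : j = j'
  · subst h
    rw [if_pos rfl, if_pos le_rfl, if_neg (by omega), smul_eq_mul, mul_one, sub_zero, mul_one]
    exact Finset.mul_prod_erase univ (fun k : Fin n => a (k : ℕ)) (Finset.mem_univ j)
  · rw [if_neg h, smul_eq_mul, mul_zero]
    have hne : (j : ℕ) ≠ (j' : ℕ) := fun hc => h (Fin.ext hc)
    by_cases h2 : (j : ℕ) ≤ (j' : ℕ)
    · rw [if_pos h2, if_pos (by omega)]; ring
    · rw [if_neg h2, if_neg (by omega)]; ring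

lemma isUnit_det_T0 {a : ℕ → ℝ} (ha : ∀ k, k < n → 0 < a k) (s : Fin n → Bool)
    (σ : Equiv.Perm (Fin n)) : IsUnit (T0 a s σ).det := by
  rw [det_T0, isUnit_iff_ne_zero]
  apply mul_ne_zero
  · intro h; have := esgn_mul_self s σ; rw [h, zero_mul] at this; norm_num at this
  · exact ne_of_gt (Finset.prod_pos fun j _ => ha _ j.isLt)

lemma adjugate_T0 {a : ℕ → ℝ} (ha : ∀ k, k < n → 0 < a k) (s : Fin n → Bool)
    (σ : Equiv.Perm (Fin n)) :
    (T0 a s σ).adjugate = esgn s σ • Cmat a s σ := by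
  have hu := isUnit_det_T0 ha s σ
  have h1 : T0 a s σ * (esgn s σ • Cmat a s σ) = T0 a s σ * (T0 a s σ).adjugate := by
    rw [Matrix.mul_smul, T0_mul_Cmat, Matrix.mul_adjugate, det_T0, smul_smul, mul_comm]
  calc (T0 a s σ).adjugate
      = (T0 a s σ)⁻¹ * (T0 a s σ * (T0 a s σ).adjugate) := by
        rw [Matrix.nonsing_inv_mul_cancel_left _ _ hu]
    _ = (T0 a s σ)⁻¹ * (T0 a s σ * (esgn s σ • Cmat a s σ)) := by rw [h1]
    _ = esgn s σ • Cmat a s σ := by rw [Matrix.nonsing_inv_mul_cancel_left _ _ hu]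

lemma det_updateRow_T0 {a : ℕ → ℝ} (ha : ∀ k, k < n → 0 < a k) (s : Fin n → Bool)
    (σ : Equiv.Perm (Fin n)) (j : Fin n) (v : Fin n → ℝ) :
    ((T0 a s σ).updateRow j v).det = ∑ i, (esgn s σ * Cmat a s σ i j) * v i := by
  have h1 : (T0 a s σ).updateRow j v = (((T0 a s σ).transpose.updateCol j v)).transpose := by
    rw [← Matrix.updateRow_transpose, Matrix.transpose_transpose]
  rw [h1, Matrix.det_transpose, ← Matrix.cramer_apply, Matrix.cramer_eq_adjugate_mulVec,
    ← Matrix.adjugate_transpose, adjugate_T0 ha]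
  simp only [Matrix.mulVec, dotProduct, Matrix.transpose_apply, Matrix.smul_apply,
    smul_eq_mul]

/-! ### The determinant as a continuous multilinear map -/

def detCMM (n : ℕ) : ContinuousMultilinearMap ℝ (fun _ : Fin n => (Fin n → ℝ)) ℝ :=
  MultilinearMap.mkContinuous
    (Matrix.detRowAlternating : (Fin n → ℝ) [⋀^Fin n]→ₗ[ℝ] ℝ).toMultilinearMap
    (n.factorial) (by
      intro m
      have h1 : Matrix.detRowAlternating (Matrix.of m) =
          ∑ σ : Equiv.Perm (Fin n), (Equiv.Perm.sign σ : ℤ) •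
            ∏ i, Matrix.of m (σ i) i := Matrix.det_apply _
      show ‖Matrix.detRowAlternating (Matrix.of m)‖ ≤ _
      rw [h1, Real.norm_eq_abs]
      calc |∑ σ : Equiv.Perm (Fin n), (Equiv.Perm.sign σ : ℤ) • ∏ i, Matrix.of m (σ i) i|
          ≤ ∑ σ : Equiv.Perm (Fin n), |(Equiv.Perm.sign σ : ℤ) • ∏ i, Matrix.of m (σ i) i| :=
            Finset.abs_sum_le_sum_abs _ _
        _ ≤ ∑ _σ : Equiv.Perm (Fin n), ∏ i, ‖m i‖ := by
            apply Finset.sum_le_sum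
            intro σ _
            have habs : |(Equiv.Perm.sign σ : ℤ) • ∏ i, Matrix.of m (σ i) i|
                = |∏ i, Matrix.of m (σ i) i| := by
              rcases Int.units_eq_one_or (Equiv.Perm.sign σ) with h | h <;> rw [h] <;> simp
            rw [habs, Finset.abs_prod]
            calc ∏ i, |Matrix.of m (σ i) i| ≤ ∏ i, ‖m (σ i)‖ := by
                    apply Finset.prod_le_prod (fun i _ => abs_nonneg _)
                    intro i _
                    exact (norm_le_pi_norm (m (σ i)) i :)
              _ = ∏ i, ‖m i‖ := Equiv.prod_comp σ (fun k => ‖m k‖)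
        _ = (n.factorial : ℝ) * ∏ i, ‖m i‖ := by
            rw [Finset.sum_const, nsmul_eq_mul]
            congr 1
            rw [Finset.card_univ, Fintype.card_perm, Fintype.card_fin]
        _ ≤ (n.factorial : ℝ) * ∏ i, ‖m i‖ := le_rfl)

lemma detCMM_apply (m : Fin n → Fin n → ℝ) : detCMM n m = (Matrix.of m).det := rfl

/-! ### Differentiability of `|f|` -/

lemma hasFDerivAt_abs_comp {α : Type*} [NormedAddCommGroup α] [NormedSpace ℝ α]
    {f : α → ℝ} {L : α →L[ℝ] ℝ} {x : α} (hf : HasFDerivAt f L x) {d : ℝ}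
    (hd : 0 < d * f x) (hd2 : d * d = 1) :
    HasFDerivAt (fun y => |f y|) (d • L) x := by
  have hds : d = 1 ∨ d = -1 := mul_self_eq_one_iff.mp hd2
  have hc : ContinuousAt (fun y => d * f y) x := continuousAt_const.mul hf.continuousAt
  have hev : ∀ᶠ y in nhds x, 0 < d * f y := by
    have := hc.preimage_mem_nhds (Ioi_mem_nhds hd)
    filter_upwards [this] with y hy using hy
  have heq : (fun y => |f y|) =ᶠ[nhds x] fun y => d * f y := by
    filter_upwards [hev] with y hy
    rcases hds with h | h
    · subst h; rw [one_mul] at hy ⊢; exact abs_of_pos hy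
    · subst h
      have : f y < 0 := by linarith
      rw [abs_of_neg this]; ring
  exact (hf.const_mul d).congr_of_eventuallyEq heq


/-! ### Geometry of flag faces -/

lemma ctr_flagFace (s : Fin n → Bool) (σ : Equiv.Perm (Fin n)) (j i : Fin n) :
    ctr (flagFace s σ j) i = if (σ i : ℕ) < (j : ℕ) then 0 else χ (s i) := by
  show ((flagVec s σ j i : SignType) : ℝ) = _
  unfold flagVec
  by_cases h : (σ i : ℕ) < (j : ℕ)
  · simp [h]
  · by_cases hs : s i <;> simp [h, hs, χ]

lemma faceDim_flagFace (s : Fin n → Bool) (σ : Equiv.Perm (Fin n)) (j : Fin n) :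
    faceDim (flagFace s σ j) = (j : ℕ) := by
  unfold faceDim
  have h1 : (univ.filter fun i => (flagFace s σ j).1 i = 0) =
      univ.filter fun i => (σ i : ℕ) < (j : ℕ) := by
    apply Finset.filter_congr
    intro i _
    show flagVec s σ j i = 0 ↔ _
    unfold flagVec
    by_cases h : (σ i : ℕ) < (j : ℕ)
    · simp [h]
    · by_cases hs : s i <;> simp [h, hs]
  rw [h1]
  have h2 : (univ.filter fun i => (σ i : ℕ) < (j : ℕ)) =
      (univ.filter fun m : Fin n => (m : ℕ) < (j : ℕ)).map σ.symm.toEmbedding := by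
    ext i
    rw [Finset.mem_map_equiv]
    simp only [Equiv.symm_symm, Finset.mem_filter, Finset.mem_univ, true_and]
  rw [h2, Finset.card_map]
  have h3 : (univ.filter fun m : Fin n => (m : ℕ) < (j : ℕ)) = Finset.Iio j := by
    ext m
    simp only [Finset.mem_filter, Finset.mem_univ, true_and, Finset.mem_Iio]
    exact Iff.rfl
  rw [h3, Fin.card_Iio]

lemma flagFace_update {s : Fin n → Bool} {σ : Equiv.Perm (Fin n)} {i j : Fin n}
    (h : (σ i : ℕ) < (j : ℕ)) (b : Bool) :
    flagFace (Function.update s i b) σ j = flagFace s σ j := by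
  apply Subtype.ext
  funext i'
  show flagVec (Function.update s i b) σ j i' = flagVec s σ j i'
  unfold flagVec
  rcases eq_or_ne i' i with rfl | h'
  · rw [if_pos h, if_pos h]
  · rw [Function.update_of_ne h']

lemma flagFace_swap {s : Fin n → Bool} {σ : Equiv.Perm (Fin n)} {j m : Fin n}
    (h : (j : ℕ) ≤ (m : ℕ)) :
    flagFace s (Equiv.swap j m * σ) j = flagFace s σ j := by
  apply Subtype.ext
  funext i
  have hval : ((Equiv.swap j m (σ i) : Fin n) : ℕ) < (j : ℕ) ↔ (σ i : ℕ) < (j : ℕ) := by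
    rcases eq_or_ne (σ i) j with h1 | h1
    · have := congrArg Fin.val h1
      rw [h1, Equiv.swap_apply_left]
      omega
    · rcases eq_or_ne (σ i) m with h2 | h2
      · have := congrArg Fin.val h2
        rw [h2, Equiv.swap_apply_right]
        omega
      · rw [Equiv.swap_apply_of_ne_of_ne h1 h2]
  show flagVec s (Equiv.swap j m * σ) j i = flagVec s σ j i
  unfold flagVec
  simp only [Equiv.Perm.mul_apply]
  show (if ((Equiv.swap j m (σ i) : Fin n) : ℕ) < (j : ℕ) then (0:SignType) else if s i then 1 else -1) = _
  by_cases hc : (σ i : ℕ) < (j : ℕ)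
  · rw [if_pos (hval.mpr hc), if_pos hc]
  · rw [if_neg (fun hx => hc (hval.mp hx)), if_neg hc]

/-! ### Row maps and the derivative of each `|det|` summand -/

def rowmap (s : Fin n → Bool) (σ : Equiv.Perm (Fin n)) (j : Fin n) :
    (Face n → EuclideanSpace ℝ (Fin n)) →L[ℝ] (Fin n → ℝ) :=
  (PiLp.continuousLinearEquiv 2 ℝ (fun _ : Fin n => ℝ)).toContinuousLinearMap.comp
    (ContinuousLinearMap.proj (flagFace s σ j))

lemma rowmap_apply (s : Fin n → Bool) (σ : Equiv.Perm (Fin n)) (j : Fin n)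
    (X : Face n → EuclideanSpace ℝ (Fin n)) (i : Fin n) :
    rowmap s σ j X i = X (flagFace s σ j) i := rfl

def Lmap (a : ℕ → ℝ) (s : Fin n → Bool) (σ : Equiv.Perm (Fin n)) :
    (Face n → EuclideanSpace ℝ (Fin n)) →L[ℝ] ℝ :=
  ∑ j : Fin n, ((detCMM n).toContinuousLinearMap (T0 a s σ) j).comp (rowmap s σ j)

lemma X0_row (a : ℕ → ℝ) (s : Fin n → Bool) (σ : Equiv.Perm (Fin n)) (j : Fin n) :
    rowmap s σ j (fun F : Face n => a (faceDim F) • ctr F) = T0 a s σ j := by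
  funext i
  rw [rowmap_apply]
  show a (faceDim (flagFace s σ j)) * ctr (flagFace s σ j) i = _
  rw [faceDim_flagFace, ctr_flagFace]
  rfl

lemma Lmap_apply (a : ℕ → ℝ) (s : Fin n → Bool) (σ : Equiv.Perm (Fin n))
    (ΔX : Face n → EuclideanSpace ℝ (Fin n)) :
    Lmap a s σ ΔX = ∑ j,
      ((T0 a s σ).updateRow j (fun i => ΔX (flagFace s σ j) i)).det := by
  unfold Lmap
  rw [ContinuousLinearMap.sum_apply]
  refine Finset.sum_congr rfl fun j _ => ?_
  rw [ContinuousLinearMap.comp_apply]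
  rfl

lemma hasFDerivAt_absdet {a : ℕ → ℝ} (ha : ∀ k, k < n → 0 < a k) (s : Fin n → Bool)
    (σ : Equiv.Perm (Fin n)) :
    HasFDerivAt (fun X : Face n → EuclideanSpace ℝ (Fin n) =>
        |(Matrix.of fun i j : Fin n => X (flagFace s σ j) i).det|)
      (esgn s σ • Lmap a s σ) (fun F => a (faceDim F) • ctr F) := by
  have hfun : (fun X : Face n → EuclideanSpace ℝ (Fin n) =>
      |(Matrix.of fun i j : Fin n => X (flagFace s σ j) i).det|)
      = fun X => |detCMM n (fun j => rowmap s σ j X)| := by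
    funext X
    congr 1
    have h1 : (Matrix.of fun i j : Fin n => X (flagFace s σ j) i)
        = (Matrix.of fun j i : Fin n => X (flagFace s σ j) i).transpose := rfl
    rw [h1, Matrix.det_transpose, detCMM_apply]
    rfl
  rw [hfun]
  have hrows : (fun j => rowmap s σ j (fun F : Face n => a (faceDim F) • ctr F))
      = T0 a s σ := funext fun j => X0_row a s σ j
  have hdet : HasFDerivAt (fun X : Face n → EuclideanSpace ℝ (Fin n) =>
      detCMM n (fun j => rowmap s σ j X)) (Lmap a s σ)
      (fun F : Face n => a (faceDim F) • ctr F) := by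
    have h2 := HasFDerivAt.multilinear_comp (detCMM n)
      (g := fun j X => rowmap s σ j X) (g' := fun j => rowmap s σ j)
      (x := fun F : Face n => a (faceDim F) • ctr F)
      (fun j => (rowmap s σ j).hasFDerivAt)
    rw [show (fun j => rowmap s σ j (fun F : Face n => a (faceDim F) • ctr F))
      = T0 a s σ from hrows] at h2
    exact h2
  have hval : detCMM n (fun j => rowmap s σ j (fun F : Face n => a (faceDim F) • ctr F))
      = esgn s σ * ∏ j : Fin n, a (j : ℕ) := by
    rw [hrows, detCMM_apply (T0 a s σ)]
    exact det_T0 a s σ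
  refine hasFDerivAt_abs_comp hdet ?_ (esgn_mul_self s σ)
  rw [hval, ← mul_assoc, esgn_mul_self, one_mul]
  exact Finset.prod_pos fun j _ => ha _ j.isLt

/-! ### The two cancellation identities -/

lemma inner_expand (x y : EuclideanSpace ℝ (Fin n)) :
    (inner ℝ x y : ℝ) = ∑ i, x i * y i := by
  rw [PiLp.inner_apply]
  refine Finset.sum_congr rfl fun i _ => ?_
  simp [RCLike.inner_apply, mul_comm]

lemma sumB {σ : Equiv.Perm (Fin n)} {j i : Fin n} (hc : (σ i : ℕ) < (j : ℕ))
    (ΔX : Face n → EuclideanSpace ℝ (Fin n)) :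
    ∑ s : Fin n → Bool, χ (s i) * ΔX (flagFace s σ j) i = 0 := by
  have hinv : Function.Involutive (fun s : Fin n → Bool => Function.update s i (!(s i))) := by
    intro s
    funext i'
    rcases eq_or_ne i' i with rfl | h
    · simp
    · simp [Function.update_of_ne h]
  have hre := Equiv.sum_comp (Function.Involutive.toPerm _ hinv)
    (fun s : Fin n → Bool => χ (s i) * ΔX (flagFace s σ j) i)
  have hterm : ∀ s : Fin n → Bool,
      χ ((Function.update s i (!(s i))) i) * ΔX (flagFace (Function.update s i (!(s i))) σ j) i
      = - (χ (s i) * ΔX (flagFace s σ j) i) := by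
    intro s
    rw [Function.update_self, χ_not, flagFace_update hc]
    ring
  have h2 : ∑ s : Fin n → Bool, χ (s i) * ΔX (flagFace s σ j) i
      = - ∑ s : Fin n → Bool, χ (s i) * ΔX (flagFace s σ j) i := by
    conv_lhs => rw [← hre]
    rw [← Finset.sum_neg_distrib]
    refine Finset.sum_congr rfl fun s _ => ?_
    have : (Function.Involutive.toPerm _ hinv) s = Function.update s i (!(s i)) := rfl
    rw [this, hterm]
  linarith

lemma sumA {s : Fin n → Bool} {j : Fin n}
    {ΔX : Face n → EuclideanSpace ℝ (Fin n)}
    (hΔX : ∀ F : Face n, (inner ℝ (ΔX F) (ctr F) : ℝ) = 0) :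
    ∑ σ : Equiv.Perm (Fin n), χ (s (σ.symm j)) * ΔX (flagFace s σ j) (σ.symm j) = 0 := by
  set S := ∑ σ : Equiv.Perm (Fin n), χ (s (σ.symm j)) * ΔX (flagFace s σ j) (σ.symm j) with hS
  have hswap : ∀ m : Fin n, (j : ℕ) ≤ (m : ℕ) →
      S = ∑ σ : Equiv.Perm (Fin n), χ (s (σ.symm m)) * ΔX (flagFace s σ j) (σ.symm m) := by
    intro m hm
    have hre := Equiv.sum_comp (Equiv.mulLeft (Equiv.swap j m))
      (fun σ : Equiv.Perm (Fin n) => χ (s (σ.symm j)) * ΔX (flagFace s σ j) (σ.symm j))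
    rw [hS, ← hre]
    refine Finset.sum_congr rfl fun σ _ => ?_
    have h1 : (Equiv.mulLeft (Equiv.swap j m) σ).symm j = σ.symm m := by
      have hx : (Equiv.mulLeft (Equiv.swap j m) σ) (σ.symm m) = j := by
        show (Equiv.swap j m) (σ (σ.symm m)) = j
        rw [Equiv.apply_symm_apply, Equiv.swap_apply_right]
      exact (Equiv.symm_apply_eq _).mpr hx.symm
    have h2 : flagFace s (Equiv.mulLeft (Equiv.swap j m) σ) j = flagFace s σ j := by
      show flagFace s (Equiv.swap j m * σ) j = flagFace s σ j
      exact flagFace_swap hm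
    rw [h1, h2]
  have hfilter : ∀ σ : Equiv.Perm (Fin n),
      ∑ m ∈ univ.filter (fun m : Fin n => (j : ℕ) ≤ (m : ℕ)),
        χ (s (σ.symm m)) * ΔX (flagFace s σ j) (σ.symm m) = 0 := by
    intro σ
    rw [Finset.sum_filter]
    rw [← Equiv.sum_comp σ (fun m : Fin n => if (j : ℕ) ≤ (m : ℕ) then
      χ (s (σ.symm m)) * ΔX (flagFace s σ j) (σ.symm m) else 0)]
    have hterm : ∀ i : Fin n, (if (j : ℕ) ≤ ((σ i : Fin n) : ℕ) then
        χ (s (σ.symm (σ i))) * ΔX (flagFace s σ j) (σ.symm (σ i)) else 0)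
        = ΔX (flagFace s σ j) i * ctr (flagFace s σ j) i := by
      intro i
      rw [Equiv.symm_apply_apply, ctr_flagFace]
      by_cases h : (σ i : ℕ) < (j : ℕ)
      · rw [if_neg (by omega), if_pos h, mul_zero]
      · rw [if_pos (by omega), if_neg h]
        ring
    rw [Finset.sum_congr rfl fun i _ => hterm i, ← inner_expand]
    exact hΔX _
  have hcard : (univ.filter fun m : Fin n => (j : ℕ) ≤ (m : ℕ)).card ≠ 0 := by
    have hj : j ∈ univ.filter fun m : Fin n => (j : ℕ) ≤ (m : ℕ) := by simp
    intro h
    rw [Finset.card_eq_zero] at h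
    rw [h] at hj
    exact Finset.notMem_empty j hj
  have hmain : (univ.filter fun m : Fin n => (j : ℕ) ≤ (m : ℕ)).card • S = 0 := by
    rw [← Finset.sum_const]
    calc ∑ _m ∈ univ.filter (fun m : Fin n => (j : ℕ) ≤ (m : ℕ)), S
        = ∑ m ∈ univ.filter (fun m : Fin n => (j : ℕ) ≤ (m : ℕ)),
            ∑ σ : Equiv.Perm (Fin n), χ (s (σ.symm m)) * ΔX (flagFace s σ j) (σ.symm m) := by
          refine Finset.sum_congr rfl fun m hm => ?_
          exact hswap m (by simpa using hm)
      _ = ∑ σ : Equiv.Perm (Fin n), ∑ m ∈ univ.filter (fun m : Fin n => (j : ℕ) ≤ (m : ℕ)),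
            χ (s (σ.symm m)) * ΔX (flagFace s σ j) (σ.symm m) := Finset.sum_comm
      _ = 0 := by
          rw [Finset.sum_congr rfl fun σ _ => hfilter σ, Finset.sum_const_zero]
  rw [nsmul_eq_mul, mul_eq_zero] at hmain
  rcases hmain with h | h
  · exact absurd (Nat.cast_eq_zero.mp h) hcard
  · exact h

lemma total_zero {a : ℕ → ℝ} (ha : ∀ k, k < n → 0 < a k)
    {ΔX : Face n → EuclideanSpace ℝ (Fin n)}
    (hΔX : ∀ F : Face n, (inner ℝ (ΔX F) (ctr F) : ℝ) = 0) :
    ∑ s : Fin n → Bool, ∑ σ : Equiv.Perm (Fin n), esgn s σ * Lmap a s σ ΔX = 0 := by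
  have hL : ∀ (s : Fin n → Bool) (σ : Equiv.Perm (Fin n)), esgn s σ * Lmap a s σ ΔX
      = ∑ j : Fin n, ∑ i : Fin n, Cmat a s σ i j * ΔX (flagFace s σ j) i := by
    intro s σ
    rw [Lmap_apply, Finset.mul_sum]
    refine Finset.sum_congr rfl fun j _ => ?_
    rw [det_updateRow_T0 ha, Finset.mul_sum]
    refine Finset.sum_congr rfl fun i _ => ?_
    have h2 := esgn_mul_self s σ
    calc esgn s σ * ((esgn s σ * Cmat a s σ i j) * ΔX (flagFace s σ j) i)
        = (esgn s σ * esgn s σ) * (Cmat a s σ i j * ΔX (flagFace s σ j) i) := by ring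
      _ = Cmat a s σ i j * ΔX (flagFace s σ j) i := by rw [h2, one_mul]
  rw [Finset.sum_congr rfl fun s _ => Finset.sum_congr rfl fun σ _ => hL s σ]
  have hsplit : ∀ (s : Fin n → Bool) (σ : Equiv.Perm (Fin n)) (j i : Fin n),
      Cmat a s σ i j * ΔX (flagFace s σ j) i
      = (∏ k ∈ univ.erase j, a (k : ℕ)) *
          ((if (j : ℕ) = (σ i : ℕ) then (1:ℝ) else 0) * (χ (s i) * ΔX (flagFace s σ j) i))
        - (∏ k ∈ univ.erase j, a (k : ℕ)) *
          ((if (j : ℕ) = (σ i : ℕ) + 1 then (1:ℝ) else 0) * (χ (s i) * ΔX (flagFace s σ j) i)) := by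
    intro s σ j i
    show (∏ k ∈ univ.erase j, a (k : ℕ)) * χ (s i) * (_ - _) * _ = _
    ring
  rw [Finset.sum_congr rfl fun s _ => Finset.sum_congr rfl fun σ _ =>
    Finset.sum_congr rfl fun j _ => Finset.sum_congr rfl fun i _ => hsplit s σ j i]
  simp only [Finset.sum_sub_distrib]
  have partA : ∑ s : Fin n → Bool, ∑ σ : Equiv.Perm (Fin n), ∑ j : Fin n, ∑ i : Fin n,
      (∏ k ∈ univ.erase j, a (k : ℕ)) *
        ((if (j : ℕ) = (σ i : ℕ) then (1:ℝ) else 0) * (χ (s i) * ΔX (flagFace s σ j) i)) = 0 := by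
    have hcollapse : ∀ (s : Fin n → Bool) (σ : Equiv.Perm (Fin n)) (j : Fin n),
        ∑ i : Fin n, (if (j : ℕ) = (σ i : ℕ) then (1:ℝ) else 0) *
          (χ (s i) * ΔX (flagFace s σ j) i)
        = χ (s (σ.symm j)) * ΔX (flagFace s σ j) (σ.symm j) := by
      intro s σ j
      rw [Finset.sum_eq_single (σ.symm j)]
      · rw [if_pos (by rw [Equiv.apply_symm_apply]), one_mul]
      · intro i _ hne
        rw [if_neg, zero_mul]
        intro hval
        exact hne ((Equiv.eq_symm_apply σ).mpr (Fin.ext hval).symm)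
      · intro h
        exact absurd (Finset.mem_univ _) h
    have e1 : ∑ s : Fin n → Bool, ∑ σ : Equiv.Perm (Fin n), ∑ j : Fin n, ∑ i : Fin n,
        (∏ k ∈ univ.erase j, a (k : ℕ)) *
          ((if (j : ℕ) = (σ i : ℕ) then (1:ℝ) else 0) * (χ (s i) * ΔX (flagFace s σ j) i))
        = ∑ s : Fin n → Bool, ∑ σ : Equiv.Perm (Fin n), ∑ j : Fin n,
            (∏ k ∈ univ.erase j, a (k : ℕ)) *
              (χ (s (σ.symm j)) * ΔX (flagFace s σ j) (σ.symm j)) := by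
      refine Finset.sum_congr rfl fun s _ => Finset.sum_congr rfl fun σ _ =>
        Finset.sum_congr rfl fun j _ => ?_
      rw [← Finset.mul_sum, hcollapse s σ j]
    rw [e1]
    have e2 : ∑ s : Fin n → Bool, ∑ σ : Equiv.Perm (Fin n), ∑ j : Fin n,
        (∏ k ∈ univ.erase j, a (k : ℕ)) *
          (χ (s (σ.symm j)) * ΔX (flagFace s σ j) (σ.symm j))
        = ∑ s : Fin n → Bool, ∑ j : Fin n, ∑ σ : Equiv.Perm (Fin n),
            (∏ k ∈ univ.erase j, a (k : ℕ)) *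
              (χ (s (σ.symm j)) * ΔX (flagFace s σ j) (σ.symm j)) :=
      Finset.sum_congr rfl fun s _ => Finset.sum_comm
    rw [e2]
    refine Finset.sum_eq_zero fun s _ => Finset.sum_eq_zero fun j _ => ?_
    rw [← Finset.mul_sum, sumA hΔX, mul_zero]
  have partB : ∑ s : Fin n → Bool, ∑ σ : Equiv.Perm (Fin n), ∑ j : Fin n, ∑ i : Fin n,
      (∏ k ∈ univ.erase j, a (k : ℕ)) *
        ((if (j : ℕ) = (σ i : ℕ) + 1 then (1:ℝ) else 0) *
          (χ (s i) * ΔX (flagFace s σ j) i)) = 0 := by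
    rw [Finset.sum_comm]
    refine Finset.sum_eq_zero fun σ _ => ?_
    rw [Finset.sum_comm]
    refine Finset.sum_eq_zero fun j _ => ?_
    rw [Finset.sum_comm]
    refine Finset.sum_eq_zero fun i _ => ?_
    by_cases hc : (j : ℕ) = (σ i : ℕ) + 1
    · have e3 : ∀ s : Fin n → Bool,
          (∏ k ∈ univ.erase j, a (k : ℕ)) *
            ((if (j : ℕ) = (σ i : ℕ) + 1 then (1:ℝ) else 0) * (χ (s i) * ΔX (flagFace s σ j) i))
          = (∏ k ∈ univ.erase j, a (k : ℕ)) * (χ (s i) * ΔX (flagFace s σ j) i) := by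
        intro s
        rw [if_pos hc, one_mul]
      rw [Finset.sum_congr rfl fun s _ => e3 s, ← Finset.mul_sum,
        sumB (show (σ i : ℕ) < (j : ℕ) by omega) ΔX, mul_zero]
    · refine Finset.sum_eq_zero fun s _ => ?_
      rw [if_neg hc, zero_mul, mul_zero]
  rw [partA, partB, sub_zero]

end CK



/-- Lemma 4. -/
theorem kernel_of_differential (n : ℕ) (hn : 1 ≤ n) (a : ℕ → ℝ)
    (ha : ∀ k, k < n → 0 < a k) :
    DifferentiableAt ℝ (gvol n) (fun F => a (faceDim F) • ctr F) ∧
      ∀ ΔX : Face n → EuclideanSpace ℝ (Fin n),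
        (∀ F : Face n, ⟪ΔX F, ctr F⟫ = 0) →
        fderiv ℝ (gvol n) (fun F => a (faceDim F) • ctr F) ΔX = 0 := by
  have hG : HasFDerivAt (gvol n)
      ((1 / n.factorial : ℝ) • ∑ s : Fin n → Bool, ∑ σ : Equiv.Perm (Fin n),
        (CK.esgn s σ • CK.Lmap a s σ))
      (fun F => a (faceDim F) • ctr F) := by
    have h1 : HasFDerivAt (fun X : Face n → EuclideanSpace ℝ (Fin n) =>
        ∑ s : Fin n → Bool, ∑ σ : Equiv.Perm (Fin n),
          |(Matrix.of fun i j : Fin n => X (flagFace s σ j) i).det|)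
        (∑ s : Fin n → Bool, ∑ σ : Equiv.Perm (Fin n), CK.esgn s σ • CK.Lmap a s σ)
        (fun F => a (faceDim F) • ctr F) :=
      HasFDerivAt.fun_sum fun s _ => HasFDerivAt.fun_sum fun σ _ => CK.hasFDerivAt_absdet ha s σ
    have h2 := h1.const_mul ((1 : ℝ) / n.factorial)
    exact h2
  refine ⟨hG.differentiableAt, fun ΔX hΔX => ?_⟩
  rw [hG.fderiv]
  have hz : (∑ s : Fin n → Bool, ∑ σ : Equiv.Perm (Fin n),
      CK.esgn s σ • CK.Lmap a s σ) ΔX = 0 := by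
    simp only [ContinuousLinearMap.sum_apply, ContinuousLinearMap.smul_apply, smul_eq_mul]
    exact CK.total_zero ha hΔX
  rw [ContinuousLinearMap.smul_apply, hz, smul_zero]
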